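/- If a matching M is popular, then G_M (the graph G with all (−,−) edges with respect to M removed) contains no M-alternating cycle containing a (+,+) edge. -/

import Mathlib

/-- A roommates instance: a simple graph together with, for each vertex,
a ranking of vertices (lower rank = more preferred), injective on neighbors. -/
structure Roommates (V : Type*) where
  G : SimpleGraph V
  rank : V → V → ℕ
  rank_inj : ∀ u a b, G.Adj u a → G.Adj u b → rank u a = rank u b → a = b

variable {V : Type*}

/-- `M` encodes a matching: `M u = some v` means `u` is matched to `v`. -/
def IsMatching (R : Roommates V) (M : V → Option V) : Prop :=
  ∀ u v, M u = some v → R.G.Adj u v ∧ M v = some u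

/-- Vertex `v` prefers matching `M` to matching `M'`. -/
def Prefers (R : Roommates V) (M M' : V → Option V) (v : V) : Prop :=
  (∃ w, M v = some w ∧ M' v = none) ∨
  (∃ w w', M v = some w ∧ M' v = some w' ∧ R.rank v w < R.rank v w')

/-- `M` is popular: it never loses a head-to-head election. -/
def Popular [Fintype V] (R : Roommates V) (M : V → Option V) : Prop :=
  ∀ M', IsMatching R M' →
    {v | Prefers R M' M v}.ncard ≤ {v | Prefers R M M' v}.ncard

/-- Edge `(u,v)` blocks `M`: each endpoint is unmatched or prefers the other
endpoint to its partner. -/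
def Blocks (R : Roommates V) (M : V → Option V) (u v : V) : Prop :=
  R.G.Adj u v ∧ M u ≠ some v ∧
  (∀ w, M u = some w → R.rank u v < R.rank u w) ∧
  (∀ w, M v = some w → R.rank v u < R.rank v w)

def IsStable (R : Roommates V) (M : V → Option V) : Prop :=
  ∀ u v, ¬ Blocks R M u v

/-- `u` votes `+` for `v` against its situation in `M`
(true when `u` is unmatched or prefers `v` to its `M`-partner). -/
def VotePlus (R : Roommates V) (M : V → Option V) (u v : V) : Prop :=
  ∀ w, M u = some w → R.rank u v < R.rank u w

/-- Non-matching edge of `G_M`, i.e. not labeled `(−,−)`. -/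
def NonMatchEdge (R : Roommates V) (M : V → Option V) (u v : V) : Prop :=
  R.G.Adj u v ∧ M u ≠ some v ∧ (VotePlus R M u v ∨ VotePlus R M v u)

/-- `AltList A M b l`: the list of vertices `l` forms an alternating sequence,
whose first edge is a matching edge if `b = true` and an allowed (`A`)
non-matching edge if `b = false`. -/
def AltList (A : V → V → Prop) (M : V → Option V) : Bool → List V → Prop
  | _, [] => True
  | _, [_] => True
  | true, u :: v :: rest => M u = some v ∧ AltList A M false (v :: rest)
  | false, u :: v :: rest => A u v ∧ AltList A M true (v :: rest)

/-- A matching of the subgraph induced on `W`. -/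
def IsMatchingOn (R : Roommates V) (W : Set V) (M : V → Option V) : Prop :=
  IsMatching R M ∧ ∀ u v, M u = some v → u ∈ W ∧ v ∈ W

/-- Popularity within the subgraph induced on `W`. -/
def PopularOn (R : Roommates V) (W : Set V) (M : V → Option V) : Prop :=
  ∀ M', IsMatchingOn R W M' →
    {v | v ∈ W ∧ Prefers R M' M v}.ncard ≤ {v | v ∈ W ∧ Prefers R M M' v}.ncard

/-- Stability within the subgraph induced on `W`. -/
def StableOn (R : Roommates V) (W : Set V) (M : V → Option V) : Prop :=
  ∀ u v, u ∈ W → v ∈ W → ¬ Blocks R M u v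


section AuxAltCycle

variable {V : Type*}

/-- Split a list into consecutive disjoint pairs. -/
def chunks : List V → List (V × V)
  | a :: b :: rest => (a, b) :: chunks rest
  | _ => []

/-- Flatten a list of pairs. -/
def fl (P : List (V × V)) : List V := P.flatMap fun p => [p.1, p.2]

theorem chunks_flat : ∀ (l : List V), Even l.length → fl (chunks l) = l
  | [], _ => rfl
  | [a], h => absurd h (by simp)
  | a :: b :: rest, h => by
    have hr : Even rest.length := by
      rcases h with ⟨k, hk⟩
      simp only [List.length_cons] at hk
      exact ⟨k - 1, by omega⟩
    have ih := chunks_flat rest hr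
    simp only [chunks, fl, List.flatMap_cons] at ih ⊢
    rw [ih]
    rfl

theorem chunks_append_even : ∀ (l s : List V), Even l.length →
    chunks (l ++ s) = chunks l ++ chunks s
  | [], s, _ => by simp [chunks]
  | [a], s, h => absurd h (by simp)
  | a :: b :: rest, s, h => by
    have hr : Even rest.length := by
      rcases h with ⟨k, hk⟩
      simp only [List.length_cons] at hk
      exact ⟨k - 1, by omega⟩
    simp only [List.cons_append, chunks]
    exact congrArg _ (chunks_append_even rest s hr)

theorem altlist_chunks (A : V → V → Prop) (M : V → Option V) :
    ∀ l : List V, AltList A M true l →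
      (∀ p ∈ chunks l, M p.1 = some p.2) ∧ ∀ p ∈ chunks l.tail, A p.1 p.2
  | [], _ => by simp [chunks]
  | [a], _ => by simp [chunks]
  | [a, b], h => by
    obtain ⟨h1, -⟩ := h
    refine ⟨?_, by simp [chunks]⟩
    intro p hp
    simp only [chunks, List.mem_cons, List.not_mem_nil, or_false] at hp
    subst hp
    exact h1
  | a :: b :: c :: rest, h => by
    obtain ⟨h1, h2, h3⟩ := h
    obtain ⟨ih1, ih2⟩ := altlist_chunks A M (c :: rest) h3
    constructor
    · intro p hp
      simp only [chunks, List.mem_cons] at hp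
      rcases hp with rfl | hp
      · exact h1
      · exact ih1 p hp
    · intro p hp
      simp only [List.tail_cons, chunks, List.mem_cons] at hp
      rcases hp with rfl | hp
      · exact h2
      · exact ih2 p (by simpa using hp)

theorem mem_fl {P : List (V × V)} {p : V × V} (hp : p ∈ P) :
    p.1 ∈ fl P ∧ p.2 ∈ fl P := by
  constructor <;>
  · simp only [fl, List.mem_flatMap]
    exact ⟨p, hp, by simp⟩

theorem exists_of_mem_fl {P : List (V × V)} {u : V} (hu : u ∈ fl P) :
    ∃ p ∈ P, u = p.1 ∨ u = p.2 := by
  simp only [fl, List.mem_flatMap, List.mem_cons, List.not_mem_nil, or_false] at hu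
  exact hu

open Classical in
/-- The new matching obtained by matching along the pairs in `P`
(and keeping `M` elsewhere). -/
noncomputable def pairPartner : List (V × V) → (V → Option V) → V → Option V
  | [], M, u => M u
  | p :: P, M, u =>
    if p.1 = u then some p.2 else if p.2 = u then some p.1 else pairPartner P M u

theorem pairPartner_fst : ∀ (P : List (V × V)) (M : V → Option V) (u v : V),
    (fl P).Nodup → (u, v) ∈ P → pairPartner P M u = some v
  | [], M, u, v, _, h => absurd h (by simp)
  | p :: P, M, u, v, hnd, h => by
    have hfl : fl (p :: P) = p.1 :: p.2 :: fl P := by simp [fl]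
    rw [hfl, List.nodup_cons, List.nodup_cons] at hnd
    obtain ⟨h1, h2, h3⟩ := hnd
    rcases List.mem_cons.mp h with rfl | h
    · simp [pairPartner]
    · have hu : u ∈ fl P := (mem_fl h).1
      have hne1 : p.1 ≠ u := fun e => h1 (by rw [e]; exact List.mem_cons_of_mem _ hu)
      have hne2 : p.2 ≠ u := fun e => h2 (by rw [e]; exact hu)
      rw [pairPartner, if_neg hne1, if_neg hne2]
      exact pairPartner_fst P M u v h3 h

theorem pairPartner_snd : ∀ (P : List (V × V)) (M : V → Option V) (u v : V),
    (fl P).Nodup → (u, v) ∈ P → pairPartner P M v = some u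
  | [], M, u, v, _, h => absurd h (by simp)
  | p :: P, M, u, v, hnd, h => by
    have hfl : fl (p :: P) = p.1 :: p.2 :: fl P := by simp [fl]
    rw [hfl, List.nodup_cons, List.nodup_cons] at hnd
    obtain ⟨h1, h2, h3⟩ := hnd
    rcases List.mem_cons.mp h with rfl | h
    · have hne : u ≠ v := fun e => h1 (by rw [e]; exact List.mem_cons_self)
      rw [pairPartner]
      rw [if_neg hne, if_pos rfl]
    · have hv : v ∈ fl P := (mem_fl h).2
      have hne1 : p.1 ≠ v := fun e => h1 (by rw [e]; exact List.mem_cons_of_mem _ hv)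
      have hne2 : p.2 ≠ v := fun e => h2 (by rw [e]; exact hv)
      rw [pairPartner, if_neg hne1, if_neg hne2]
      exact pairPartner_snd P M u v h3 h

theorem pairPartner_not_mem : ∀ (P : List (V × V)) (M : V → Option V) (u : V),
    u ∉ fl P → pairPartner P M u = M u
  | [], M, u, _ => rfl
  | p :: P, M, u, h => by
    have hfl : fl (p :: P) = p.1 :: p.2 :: fl P := by simp [fl]
    rw [hfl] at h
    simp only [List.mem_cons, not_or] at h
    obtain ⟨h1, h2, h3⟩ := h
    rw [pairPartner, if_neg (Ne.symm h1), if_neg (Ne.symm h2)]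
    exact pairPartner_not_mem P M u h3

theorem pairPartner_cases : ∀ (P : List (V × V)) (M : V → Option V) (u v : V),
    pairPartner P M u = some v →
    (u, v) ∈ P ∨ (v, u) ∈ P ∨ (u ∉ fl P ∧ M u = some v)
  | [], M, u, v, h => Or.inr (Or.inr ⟨by simp [fl], h⟩)
  | p :: P, M, u, v, h => by
    rw [pairPartner] at h
    by_cases h1 : p.1 = u
    · rw [if_pos h1] at h
      have hv : p.2 = v := Option.some.inj h
      refine Or.inl ?_
      have : (u, v) = p := by rw [← h1, ← hv]
      rw [this]
      exact List.mem_cons_self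
    · rw [if_neg h1] at h
      by_cases h2 : p.2 = u
      · rw [if_pos h2] at h
        have hv : p.1 = v := Option.some.inj h
        refine Or.inr (Or.inl ?_)
        have : (v, u) = p := by rw [← h2, ← hv]
        rw [this]
        exact List.mem_cons_self
      · rw [if_neg h2] at h
        rcases pairPartner_cases P M u v h with hc | hc | ⟨hc1, hc2⟩
        · exact Or.inl (List.mem_cons_of_mem _ hc)
        · exact Or.inr (Or.inl (List.mem_cons_of_mem _ hc))
        · refine Or.inr (Or.inr ⟨?_, hc2⟩)
          have hfl : fl (p :: P) = p.1 :: p.2 :: fl P := by simp [fl]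
          rw [hfl]
          simp only [List.mem_cons, not_or]
          exact ⟨fun e => h1 e.symm, fun e => h2 e.symm, hc1⟩

theorem chunks_of_infix {x y : V} (s : List V) (h : [x, y] <:+: s) :
    (x, y) ∈ chunks s ∨ (x, y) ∈ chunks s.tail := by
  obtain ⟨pre, post, rfl⟩ := h
  rcases Nat.even_or_odd pre.length with he | ho
  · left
    rw [List.append_assoc, chunks_append_even pre _ he]
    simp [chunks]
  · right
    obtain ⟨p0, pre', rfl⟩ : ∃ a l', pre = a :: l' := by
      cases pre with
      | nil => simp at ho
      | cons a l' => exact ⟨a, l', rfl⟩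
    have hpre' : Even pre'.length := by
      rcases ho with ⟨k, hk⟩
      simp only [List.length_cons] at hk
      exact ⟨k, by omega⟩
    have ht : ((p0 :: pre') ++ [x, y] ++ post).tail = pre' ++ ([x, y] ++ post) := by
      simp
    rw [ht, chunks_append_even pre' _ hpre']
    simp [chunks]

end AuxAltCycle

/-- if `M` is popular then `G_M` contains no `M`-alternating cycle
containing a `(+,+)` (blocking) edge.  The cycle is presented as a vertex list
`l` of even length with first vertex `v0`, alternating along `l ++ [v0]`,
starting with a matching edge. -/
theorem popular_no_alt_cycle_with_blocking {V : Type*} [Fintype V]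
    (R : Roommates V) (M : V → Option V) (hM : IsMatching R M) (hpop : Popular R M)
    (l : List V) (v0 : V) (hhead : l.head? = some v0)
    (hnd : l.Nodup) (heven : Even l.length) (hlen : 2 ≤ l.length)
    (halt : AltList (NonMatchEdge R M) M true (l ++ [v0])) :
    ¬ ∃ x y, [x, y] <:+: (l ++ [v0]) ∧ Blocks R M x y := by
  classical
  -- l = v0 :: t
  obtain ⟨t, rfl⟩ : ∃ t, l = v0 :: t := by
    cases l with
    | nil => simp at hhead
    | cons a t =>
      simp only [List.head?_cons, Option.some.injEq] at hhead
      exact ⟨t, by rw [hhead]⟩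
  set l : List V := v0 :: t with hl
  -- decompose the alternating structure
  have hsplit := altlist_chunks (NonMatchEdge R M) M (l ++ [v0]) halt
  have hcs : chunks (l ++ [v0]) = chunks l := by
    rw [chunks_append_even l [v0] heven]
    simp [chunks]
  have hct : (l ++ [v0]).tail = t ++ [v0] := by simp [hl]
  set Q : List (V × V) := chunks l with hQdef
  set P : List (V × V) := chunks (t ++ [v0]) with hPdef
  have hQ : ∀ p ∈ Q, M p.1 = some p.2 := by
    intro p hp
    exact hsplit.1 p (by rw [hcs]; exact hp)
  have hP : ∀ p ∈ P, NonMatchEdge R M p.1 p.2 := by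
    intro p hp
    exact hsplit.2 p (by rw [hct]; exact hp)
  have hflQ : fl Q = l := chunks_flat l heven
  have hflP : fl P = t ++ [v0] := by
    apply chunks_flat
    have : (t ++ [v0]).length = l.length := by simp [hl]
    rw [this]; exact heven
  have hndP : (fl P).Nodup := by
    rw [hflP]
    have : (t ++ [v0]) = l.rotate 1 := by simp [hl, List.rotate_cons_succ]
    rw [this, List.nodup_rotate]
    exact hnd
  have hmem : ∀ a : V, a ∈ fl P ↔ a ∈ l := by
    intro a
    rw [hflP, hl]
    simp [or_comm]
  -- every cycle vertex is matched (within the cycle) by M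
  have matched' : ∀ a ∈ l, ∃ w ∈ l, M a = some w := by
    intro a ha
    have : a ∈ fl Q := by rw [hflQ]; exact ha
    obtain ⟨q, hqQ, hq⟩ := exists_of_mem_fl this
    have h1 : q.1 ∈ l := by rw [← hflQ]; exact (mem_fl hqQ).1
    have h2 : q.2 ∈ l := by rw [← hflQ]; exact (mem_fl hqQ).2
    rcases hq with rfl | rfl
    · exact ⟨q.2, h2, hQ q hqQ⟩
    · exact ⟨q.1, h1, (hM q.1 q.2 (hQ q hqQ)).2⟩
  -- the perturbed matching
  set M' : V → Option V := pairPartner P M with hM'def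
  have hM' : IsMatching R M' := by
    intro a b hab
    rcases pairPartner_cases P M a b hab with h | h | ⟨hna, hMab⟩
    · exact ⟨(hP _ h).1, pairPartner_snd P M a b hndP h⟩
    · exact ⟨((hP _ h).1).symm, pairPartner_fst P M b a hndP h⟩
    · refine ⟨(hM a b hMab).1, ?_⟩
      have hMba := (hM a b hMab).2
      have hnb : b ∉ fl P := by
        intro hb
        obtain ⟨w, hwl, hMbw⟩ := matched' b ((hmem b).1 hb)
        rw [hMba] at hMbw
        obtain rfl := Option.some.inj hMbw
        exact hna ((hmem a).2 hwl)
      rw [hM'def, pairPartner_not_mem P M b hnb]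
      exact hMba
  -- vertices preferring M' to M and M to M' are mutually exclusive
  have hdisj : ∀ u : V, Prefers R M' M u → Prefers R M M' u → False := by
    intro u h1 h2
    rcases h1 with ⟨w, a1, a2⟩ | ⟨w, w', a1, a2, a3⟩ <;>
      rcases h2 with ⟨z, b1, b2⟩ | ⟨z, z', b1, b2, b3⟩
    · rw [a2] at b1; exact nomatch b1
    · rw [a2] at b1; exact nomatch b1
    · rw [b2] at a1; exact nomatch a1
    · rw [a1] at b2
      rw [b1] at a2
      obtain rfl := Option.some.inj b2
      obtain rfl := Option.some.inj a2
      omega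
  -- key transfer: if a loses along a P-pair, its P-partner wins
  have core : ∀ a b : V, ((a, b) ∈ P ∨ (b, a) ∈ P) →
      Prefers R M M' a → Prefers R M' M b := by
    intro a b hor hpref
    have hMa' : M' a = some b := by
      rcases hor with h | h
      · exact pairPartner_fst P M a b hndP h
      · exact pairPartner_snd P M b a hndP h
    have hMb' : M' b = some a := by
      rcases hor with h | h
      · exact pairPartner_snd P M a b hndP h
      · exact pairPartner_fst P M b a hndP h
    have hbl : b ∈ l := by
      rcases hor with h | h
      · exact (hmem b).1 (mem_fl h).2
      · exact (hmem b).1 (mem_fl h).1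
    obtain ⟨mb, -, hMb⟩ := matched' b hbl
    have hvotes : VotePlus R M a b ∨ VotePlus R M b a := by
      rcases hor with h | h
      · exact (hP _ h).2.2
      · exact ((hP _ h).2.2).symm
    obtain ⟨ma, hMa, hlt⟩ : ∃ w, M a = some w ∧ R.rank a w < R.rank a b := by
      rcases hpref with ⟨w, c1, c2⟩ | ⟨w, w', c1, c2, c3⟩
      · rw [hMa'] at c2; exact nomatch c2
      · rw [hMa'] at c2
        obtain rfl := Option.some.inj c2
        exact ⟨w, c1, c3⟩
    have hnv : ¬ VotePlus R M a b := by
      intro hvp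
      have := hvp ma hMa
      omega
    have hvp : VotePlus R M b a := hvotes.resolve_left hnv
    exact Or.inr ⟨a, mb, hMb', hMb, hvp mb hMb⟩
  -- each loser's new partner is a winner
  have hS : ∀ v : V, Prefers R M M' v →
      ∃ u, M' v = some u ∧ M' u = some v ∧ Prefers R M' M u := by
    intro v hv
    have hvP : v ∈ fl P := by
      by_contra hvn
      have he : M' v = M v := pairPartner_not_mem P M v hvn
      rcases hv with ⟨w, hw1, hw2⟩ | ⟨w, w', h1, h2, h3⟩
      · rw [he, hw1] at hw2; exact nomatch hw2
      · rw [he, h1] at h2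
        obtain rfl := Option.some.inj h2
        omega
    obtain ⟨p, hpP, hvp⟩ := exists_of_mem_fl hvP
    rcases hvp with rfl | rfl
    · exact ⟨p.2, pairPartner_fst P M p.1 p.2 hndP hpP,
        pairPartner_snd P M p.1 p.2 hndP hpP, core p.1 p.2 (Or.inl hpP) hv⟩
    · exact ⟨p.1, pairPartner_snd P M p.1 p.2 hndP hpP,
        pairPartner_fst P M p.1 p.2 hndP hpP, core p.2 p.1 (Or.inr hpP) hv⟩
  -- now assume a blocking edge lies on the cycle
  rintro ⟨x, y, hinf, hblk⟩
  have hxy : (x, y) ∈ P := by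
    rcases chunks_of_infix _ hinf with h | h
    · rw [hcs] at h
      exact absurd (hQ _ h) hblk.2.1
    · rwa [hct] at h
  have hMx' : M' x = some y := pairPartner_fst P M x y hndP hxy
  have hMy' : M' y = some x := pairPartner_snd P M x y hndP hxy
  obtain ⟨mx, -, hMxm⟩ := matched' x ((hmem x).1 (mem_fl hxy).1)
  obtain ⟨my, -, hMym⟩ := matched' y ((hmem y).1 (mem_fl hxy).2)
  have hxp : Prefers R M' M x := Or.inr ⟨y, mx, hMx', hMxm, hblk.2.2.1 mx hMxm⟩
  have hyp : Prefers R M' M y := Or.inr ⟨x, my, hMy', hMym, hblk.2.2.2 my hMym⟩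
  -- counting
  set Sm : Set V := {v | Prefers R M M' v} with hSm
  set Sp : Set V := {v | Prefers R M' M v} with hSp
  set f : V → V := fun v => (M' v).getD v with hf
  have hinj : Set.InjOn f Sm := by
    intro a ha b hb hfab
    obtain ⟨ua, h1a, h2a, -⟩ := hS a ha
    obtain ⟨ub, h1b, h2b, -⟩ := hS b hb
    have e1 : f a = ua := by simp [hf, h1a]
    have e2 : f b = ub := by simp [hf, h1b]
    rw [e1, e2] at hfab
    subst hfab
    rw [h2a] at h2b
    exact Option.some.inj h2b
  have himg : f '' Sm ⊆ Sp \ {x} := by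
    rintro _ ⟨a, ha, rfl⟩
    obtain ⟨u, h1, h2, h3⟩ := hS a ha
    have e1 : f a = u := by simp [hf, h1]
    rw [e1]
    refine ⟨h3, ?_⟩
    intro hux
    simp only [Set.mem_singleton_iff] at hux
    subst hux
    rw [hMx'] at h2
    obtain rfl := Option.some.inj h2
    exact hdisj _ hyp ha
  have hle : Sm.ncard ≤ (Sp \ {x}).ncard := by
    rw [← Set.ncard_image_of_injOn hinj]
    exact Set.ncard_le_ncard himg (Set.toFinite _)
  have hlt2 : (Sp \ {x}).ncard < Sp.ncard :=
    Set.ncard_diff_singleton_lt_of_mem hxp (Set.toFinite _)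
  have := hpop M' hM'
  rw [← hSm, ← hSp] at this
  omega
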